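/- Let n ≥ 1 and let a_j^i (1 ≤ j ≤ m, 1 ≤ i ≤ n) be real numbers with Σ_{j=1}^m a_j^i = 3 for every i. Define f(h₁,…,h_n) = [∏_{i=1}^n (1+h_i)²] / [∏_{j=1}^m (1 + Σ_i a_j^i h_i)]. Then the mixed partial derivative ∂₁⋯∂_n f evaluated at h = 0 equals (-1)^n Σ_{I ∈ Π_n} ε_I ∏_{A ∈ I, |A| ≥ 2} (Σ_{j=1}^m ∏_{i∈A} a_j^i), where ε_I = ∏_{A∈I} (|A|-1)! and Π_n is the set of set partitions of {1,…,n}. -/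

import Mathlib

open scoped BigOperators

/-- The iterated mixed partial derivative `∂_{i₁} ⋯ ∂_{i_r} f` of a function
`f : ℝⁿ → ℝ`, taken along the list of coordinate directions `l = [i₁, …, i_r]`. -/
noncomputable def mixedPartial {n : ℕ} (l : List (Fin n)) (f : (Fin n → ℝ) → ℝ) :
    (Fin n → ℝ) → ℝ :=
  l.foldr (fun i F => fun x => fderiv ℝ F x (Pi.single i 1)) f

namespace MPAux

open Finset

variable {α : Type*} [DecidableEq α]

lemma insert_left_inj {k : α} {s t : Finset α} (hs : k ∉ s) (ht : k ∉ t)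
    (h : insert k s = insert k t) : s = t := by
  rw [← Finset.erase_insert hs, h, Finset.erase_insert ht]

/-- extend a finpartition of `s` by the new singleton `{k}`. -/
def extSingleton {s : Finset α} {k : α} (hk : k ∉ s) (π : Finpartition s) :
    Finpartition (insert k s) :=
  π.extend (b := {k}) (by simp) (Finset.disjoint_singleton_right.2 hk)
    (by rw [Finset.sup_eq_union, Finset.union_comm, ← Finset.insert_eq])

@[simp] lemma extSingleton_parts {s : Finset α} {k : α} (hk : k ∉ s) (π : Finpartition s) :
    (extSingleton hk π).parts = insert {k} π.parts := by
  simp [extSingleton]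

/-- extend a finpartition of `s` by inserting `k` into the part `A`. -/
def extInsert {s : Finset α} {k : α} (hk : k ∉ s) (π : Finpartition s) (A : Finset α)
    (hA : A ∈ π.parts) : Finpartition (insert k s) where
  parts := insert (insert k A) (π.parts.erase A)
  supIndep := by
    rw [Finset.supIndep_iff_pairwiseDisjoint, coe_insert]
    refine Set.PairwiseDisjoint.insert
      (π.disjoint.subset (coe_subset.2 (erase_subset _ _))) ?_
    intro B hB _
    rw [mem_coe, mem_erase] at hB
    have hBs : B ⊆ s := π.le hB.2
    have hkB : k ∉ B := fun h => hk (hBs h)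
    simp only [id]
    rw [Finset.disjoint_insert_left]
    exact ⟨hkB, π.disjoint hA hB.2 (Ne.symm hB.1)⟩
  sup_parts := by
    have hX : A ∪ (π.parts.erase A).sup id = s := by
      have h1 := π.sup_parts
      conv_rhs => rw [← h1, ← Finset.insert_erase hA, Finset.sup_insert]
      simp [Finset.sup_eq_union]
    rw [Finset.sup_insert]
    simp only [id_eq, Finset.sup_eq_union] at hX ⊢
    rw [Finset.insert_union, hX]
  bot_notMem := by
    simp only [Finset.bot_eq_empty, mem_insert]
    rintro (h | h)
    · exact (Finset.insert_ne_empty _ _) h.symm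
    · exact π.bot_notMem (Finset.mem_of_mem_erase h)

@[simp] lemma extInsert_parts {s : Finset α} {k : α} (hk : k ∉ s) (π : Finpartition s)
    (A : Finset α) (hA : A ∈ π.parts) :
    (extInsert hk π A hA).parts = insert (insert k A) (π.parts.erase A) := rfl

/-- the combined extension map. -/
def extMap {s : Finset α} {k : α} (hk : k ∉ s) :
    (Σ π : Finpartition s, Option {A : Finset α // A ∈ π.parts}) → Finpartition (insert k s)
  | ⟨π, none⟩ => extSingleton hk π
  | ⟨π, some A⟩ => extInsert hk π A.1 A.2

lemma singleton_not_mem_parts {s : Finset α} {k : α} (hk : k ∉ s) (π : Finpartition s) :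
    ({k} : Finset α) ∉ π.parts := fun h => hk (π.le h (mem_singleton_self k))

lemma not_mem_of_mem_parts {s : Finset α} {k : α} (hk : k ∉ s) {π : Finpartition s}
    {A : Finset α} (hA : A ∈ π.parts) : k ∉ A := fun h => hk (π.le hA h)

lemma insert_not_mem_parts {s : Finset α} {k : α} (hk : k ∉ s) (π : Finpartition s)
    {A B : Finset α} (hB : B ∈ π.parts) : insert k A ≠ B := by
  intro h
  exact hk (π.le hB (h ▸ mem_insert_self k A))

lemma extMap_injective {s : Finset α} {k : α} (hk : k ∉ s) :
    Function.Injective (extMap hk) := by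
  rintro ⟨π, o⟩ ⟨π', o'⟩ h
  have hparts := congrArg Finpartition.parts h
  match o, o' with
  | none, none =>
    simp only [extMap, extSingleton_parts] at hparts
    have hpp : π.parts = π'.parts := by
      ext B
      constructor
      · intro hB
        have hBne : B ≠ ({k} : Finset α) := fun hB' =>
          hk (π.le hB (hB' ▸ mem_singleton_self k))
        have : B ∈ insert ({k} : Finset α) π'.parts := hparts ▸ mem_insert_of_mem hB
        rcases mem_insert.1 this with h' | h'
        · exact absurd h' hBne
        · exact h'
      · intro hB
        have hBne : B ≠ ({k} : Finset α) := fun hB' =>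
          hk (π'.le hB (hB' ▸ mem_singleton_self k))
        have : B ∈ insert ({k} : Finset α) π.parts := hparts ▸ mem_insert_of_mem hB
        rcases mem_insert.1 this with h' | h'
        · exact absurd h' hBne
        · exact h'
    have : π = π' := Finpartition.ext hpp
    subst this
    rfl
  | none, some ⟨A', hA'⟩ =>
    exfalso
    simp only [extMap, extSingleton_parts, extInsert_parts] at hparts
    have h1 : ({k} : Finset α) ∈ insert (insert k A') (π'.parts.erase A') :=
      hparts ▸ mem_insert_self _ _
    rcases mem_insert.1 h1 with h' | h'
    · obtain ⟨x, hx⟩ := π'.nonempty_of_mem_parts hA'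
      have hxk : x ≠ k := fun hxk => (not_mem_of_mem_parts hk hA') (hxk ▸ hx)
      have : x ∈ ({k} : Finset α) := h' ▸ mem_insert_of_mem hx
      exact hxk (mem_singleton.1 this)
    · exact singleton_not_mem_parts hk π' (mem_of_mem_erase h')
  | some ⟨A, hA⟩, none =>
    exfalso
    simp only [extMap, extSingleton_parts, extInsert_parts] at hparts
    have h1 : ({k} : Finset α) ∈ insert (insert k A) (π.parts.erase A) :=
      hparts ▸ mem_insert_self _ _
    rcases mem_insert.1 h1 with h' | h'
    · obtain ⟨x, hx⟩ := π.nonempty_of_mem_parts hA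
      have hxk : x ≠ k := fun hxk => (not_mem_of_mem_parts hk hA) (hxk ▸ hx)
      have : x ∈ ({k} : Finset α) := h' ▸ mem_insert_of_mem hx
      exact hxk (mem_singleton.1 this)
    · exact singleton_not_mem_parts hk π (mem_of_mem_erase h')
  | some ⟨A, hA⟩, some ⟨A', hA'⟩ =>
    simp only [extMap, extInsert_parts] at hparts
    have hC : insert k A = insert k A' := by
      have h1 : insert k A ∈ insert (insert k A') (π'.parts.erase A') :=
        hparts ▸ mem_insert_self _ _
      rcases mem_insert.1 h1 with h' | h'
      · exact h'
      · exact absurd rfl (insert_not_mem_parts hk π' (mem_of_mem_erase h'))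
    have hAA : A = A' :=
      insert_left_inj (not_mem_of_mem_parts hk hA) (not_mem_of_mem_parts hk hA') hC
    subst hAA
    have hpp : π.parts = π'.parts := by
      ext B
      constructor
      · intro hB
        by_cases hBA : B = A
        · exact hBA ▸ hA'
        · have : B ∈ insert (insert k A) (π'.parts.erase A) :=
            hparts ▸ mem_insert_of_mem (mem_erase.2 ⟨hBA, hB⟩)
          rcases mem_insert.1 this with h' | h'
          · exact absurd h'.symm (insert_not_mem_parts hk π hB)
          · exact mem_of_mem_erase h'
      · intro hB
        by_cases hBA : B = A
        · exact hBA ▸ hA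
        · have : B ∈ insert (insert k A) (π.parts.erase A) :=
            hparts.symm ▸ mem_insert_of_mem (mem_erase.2 ⟨hBA, hB⟩)
          rcases mem_insert.1 this with h' | h'
          · exact absurd h'.symm (insert_not_mem_parts hk π' hB)
          · exact mem_of_mem_erase h'
    have : π = π' := Finpartition.ext hpp
    subst this
    rfl

lemma extMap_surjective {s : Finset α} {k : α} (hk : k ∉ s) :
    Function.Surjective (extMap hk) := by
  intro ρ
  have hks : k ∈ insert k s := mem_insert_self k s
  set C := ρ.part k with hCdef
  have hCmem : C ∈ ρ.parts := ρ.part_mem.2 hks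
  have hkC : k ∈ C := ρ.mem_part hks
  have hknotsup : k ∉ (ρ.parts.erase C).sup id := by
    intro hmem
    obtain ⟨B, hB, hkB⟩ := Finset.mem_sup.1 hmem
    have := ρ.part_eq_of_mem (mem_of_mem_erase hB) hkB
    exact (mem_erase.1 hB).1 (this ▸ hCdef ▸ rfl)
  by_cases hC : C = {k}
  · -- the part of k is the singleton {k}
    have hCmem' : ({k} : Finset α) ∈ ρ.parts := hC ▸ hCmem
    have hsup : (ρ.parts.erase {k}).sup id = s := by
      have h1 : insert k s = insert k ((ρ.parts.erase {k}).sup id) := by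
        conv_lhs => rw [← ρ.sup_parts, ← Finset.insert_erase hCmem']
        rw [Finset.sup_insert]
        simp only [id_eq, Finset.sup_eq_union]
        exact (Finset.insert_eq k _).symm
      exact (insert_left_inj hk (hC ▸ hknotsup) h1).symm
    refine ⟨⟨⟨ρ.parts.erase {k}, ?_, hsup, ?_⟩, none⟩, ?_⟩
    · exact ρ.supIndep.subset (erase_subset _ _)
    · exact fun h => ρ.bot_notMem (mem_of_mem_erase h)
    · apply Finpartition.ext
      simp only [extMap, extSingleton_parts]
      exact Finset.insert_erase hCmem'
  · -- the part of k has other elements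
    set A := C.erase k with hAdef
    have hCk : insert k A = C := Finset.insert_erase hkC
    have hkA : k ∉ A := Finset.notMem_erase k C
    have hAne : A ≠ ∅ := by
      intro h
      apply hC
      rw [← hCk, h]
      rfl
    have hAnotmem : A ∉ ρ.parts.erase C := by
      intro hA'
      obtain ⟨x, hx⟩ := Finset.nonempty_iff_ne_empty.2 hAne
      have hxC : x ∈ C := Finset.erase_subset k C hx
      have hACne : A ≠ C := fun h => hkA (h ▸ hkC)
      have := ρ.disjoint (mem_of_mem_erase hA') hCmem hACne
      exact (Finset.disjoint_left.1 this hx) hxC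
    have hsup : (insert A (ρ.parts.erase C)).sup id = s := by
      have h1 : insert k s = insert k ((insert A (ρ.parts.erase C)).sup id) := by
        conv_lhs => rw [← ρ.sup_parts, ← Finset.insert_erase hCmem]
        rw [Finset.sup_insert, Finset.sup_insert]
        simp only [id_eq, Finset.sup_eq_union]
        rw [← hCk, Finset.insert_union]
      refine (insert_left_inj hk ?_ h1).symm
      rw [Finset.sup_insert]
      simp only [id_eq, Finset.sup_eq_union, Finset.mem_union]
      rintro (h | h)
      · exact hkA h
      · exact hknotsup h
    refine ⟨⟨⟨insert A (ρ.parts.erase C), ?_, hsup, ?_⟩, some ⟨A, mem_insert_self _ _⟩⟩, ?_⟩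
    · rw [Finset.supIndep_iff_pairwiseDisjoint, coe_insert]
      refine Set.PairwiseDisjoint.insert
        (ρ.disjoint.subset (coe_subset.2 (erase_subset _ _))) ?_
      intro B hB hBA
      rw [mem_coe, mem_erase] at hB
      have hdisj := ρ.disjoint hCmem (hB.2) (Ne.symm hB.1)
      exact hdisj.mono_left (by simpa [hAdef, id_eq] using Finset.erase_subset k C)
    · simp only [Finset.bot_eq_empty, mem_insert]
      rintro (h | h)
      · exact hAne h.symm
      · exact ρ.bot_notMem (mem_of_mem_erase h)
    · apply Finpartition.ext
      simp only [extMap, extInsert_parts]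
      rw [Finset.erase_insert hAnotmem, hCk, Finset.insert_erase hCmem]
  
lemma sum_finpartition_insert {s : Finset α} {k : α} (hk : k ∉ s) (F : Finset α → ℝ) :
    (∑ ρ : Finpartition (insert k s), ∏ A ∈ ρ.parts, F A)
      = F {k} * (∑ π : Finpartition s, ∏ A ∈ π.parts, F A)
        + ∑ π : Finpartition s, ∑ A ∈ π.parts,
            F (insert k A) * ∏ B ∈ π.parts.erase A, F B := by
  have hbij : Function.Bijective (extMap hk) := ⟨extMap_injective hk, extMap_surjective hk⟩
  have h1 : ∑ x : (Σ π : Finpartition s, Option {A : Finset α // A ∈ π.parts}),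
      ∏ A ∈ (extMap hk x).parts, F A
        = ∑ ρ : Finpartition (insert k s), ∏ A ∈ ρ.parts, F A :=
    Fintype.sum_bijective _ hbij _ _ (fun x => rfl)
  rw [← h1, ← Finset.univ_sigma_univ, Finset.sum_sigma]
  have h2 : ∀ π : Finpartition s,
      ∑ o : Option {A : Finset α // A ∈ π.parts}, ∏ A ∈ (extMap hk ⟨π, o⟩).parts, F A
        = F {k} * ∏ A ∈ π.parts, F A
          + ∑ A ∈ π.parts, F (insert k A) * ∏ B ∈ π.parts.erase A, F B := by
    intro π
    rw [Fintype.sum_option]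
    congr 1
    · show ∏ A ∈ (extSingleton hk π).parts, F A = _
      rw [extSingleton_parts, Finset.prod_insert (singleton_not_mem_parts hk π)]
    · rw [← Finset.sum_attach π.parts
        (fun A => F (insert k A) * ∏ B ∈ π.parts.erase A, F B), ← Finset.univ_eq_attach]
      refine Finset.sum_congr rfl ?_
      rintro ⟨A, hA⟩ -
      show ∏ B ∈ (extInsert hk π A hA).parts, F B = _
      rw [extInsert_parts, Finset.prod_insert
        (fun h => insert_not_mem_parts hk π (mem_of_mem_erase h) rfl)]
  rw [Finset.sum_congr rfl (fun π _ => h2 π), Finset.sum_add_distrib, ← Finset.mul_sum]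



lemma hasFDerivAt_pow_comp {E : Type*} [NormedAddCommGroup E] [NormedSpace ℝ E]
    {g : E → ℝ} {g' : E →L[ℝ] ℝ} {x : E} (hg : HasFDerivAt g g' x) :
    ∀ p : ℕ, HasFDerivAt (fun y => g y ^ (p + 1)) ((((p : ℝ) + 1) * g x ^ p) • g') x
  | 0 => by simpa using hg
  | (p + 1) => by
    have h1 := hasFDerivAt_pow_comp hg p
    have h2 := h1.fun_mul hg
    have h3 : (fun y => g y ^ (p + 1) * g y) = fun y => g y ^ (p + 1 + 1) := by
      funext y; rw [← pow_succ]
    rw [h3] at h2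
    refine h2.congr_fderiv ?_
    ext v
    simp only [ContinuousLinearMap.smul_apply, ContinuousLinearMap.add_apply, smul_eq_mul]
    push_cast
    ring

lemma hasFDerivAt_inv_pow_comp {E : Type*} [NormedAddCommGroup E] [NormedSpace ℝ E]
    {g : E → ℝ} {g' : E →L[ℝ] ℝ} {x : E} (hg : HasFDerivAt g g' x) (hgx : g x ≠ 0) (p : ℕ) :
    HasFDerivAt (fun y => (g y ^ p)⁻¹) ((-(p : ℝ) * (g x ^ (p + 1))⁻¹) • g') x := by
  cases p with
  | zero => simpa using hasFDerivAt_const (1 : ℝ) x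
  | succ q =>
    have h1 := hasFDerivAt_pow_comp hg q
    have h2 := (hasFDerivAt_inv' (𝕜 := ℝ) (pow_ne_zero (q + 1) hgx)).comp x h1
    refine h2.congr_fderiv ?_
    ext v
    simp only [ContinuousLinearMap.coe_comp', Function.comp_apply,
      ContinuousLinearMap.smul_apply, smul_eq_mul, ContinuousLinearMap.neg_apply,
      ContinuousLinearMap.mulLeftRight_apply]
    have hne : g x ^ (q + 1) ≠ 0 := pow_ne_zero _ hgx
    field_simp
    push_cast
    ring

variable {n m : ℕ} (a : Fin m → Fin n → ℝ)

/-- the affine denominator factors -/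
def Sfun (j : Fin m) : (Fin n → ℝ) → ℝ := fun h => 1 + ∑ i, a j i * h i

/-- derivative of `Sfun` -/
noncomputable def Lmap (j : Fin m) : (Fin n → ℝ) →L[ℝ] ℝ :=
  ∑ i, (a j i) • (ContinuousLinearMap.proj i)

lemma hasFDerivAt_Sfun (j : Fin m) (x : Fin n → ℝ) :
    HasFDerivAt (Sfun a j) (Lmap a j) x := by
  have h : Sfun a j = fun h' => 1 + Lmap a j h' := by
    funext h'
    simp [Sfun, Lmap, ContinuousLinearMap.sum_apply]
  rw [h]
  exact (Lmap a j).hasFDerivAt.const_add 1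

lemma Lmap_single (j : Fin m) (k : Fin n) : Lmap a j (Pi.single k 1) = a j k := by
  simp only [Lmap, ContinuousLinearMap.sum_apply, ContinuousLinearMap.smul_apply,
    ContinuousLinearMap.proj_apply, smul_eq_mul, Pi.single_apply]
  rw [Finset.sum_congr rfl (fun i _ => by rw [mul_ite, mul_one, mul_zero]),
    Finset.sum_ite_eq' univ k (fun i => a j i)]
  simp

/-- the good open set -/
def Uset : Set (Fin n → ℝ) := {h | (∀ i, (1 : ℝ) + h i ≠ 0) ∧ ∀ j, Sfun a j h ≠ 0}

lemma isOpen_Uset : IsOpen (Uset a) := by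
  have h1 : Uset a = (⋂ i, {h : Fin n → ℝ | (1 : ℝ) + h i ≠ 0}) ∩
      ⋂ j, {h : Fin n → ℝ | Sfun a j h ≠ 0} := by
    ext h; simp [Uset, Set.mem_iInter]
  rw [h1]
  refine IsOpen.inter (isOpen_iInter_of_finite fun i => ?_)
    (isOpen_iInter_of_finite fun j => ?_)
  · exact isOpen_ne.preimage (continuous_const.add (continuous_apply i))
  · exact isOpen_ne.preimage (continuous_const.add
      (continuous_finset_sum _ fun i _ => continuous_const.mul (continuous_apply i)))

lemma zero_mem_Uset : (0 : Fin n → ℝ) ∈ Uset a := by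
  constructor
  · intro i; simp
  · intro j; simp [Sfun]

lemma hasFDerivAt_coord {n : ℕ} (i : Fin n) (x : Fin n → ℝ) :
    HasFDerivAt (fun h : Fin n → ℝ => 1 + h i)
      (ContinuousLinearMap.proj i : (Fin n → ℝ) →L[ℝ] ℝ) x := by
  simpa using ((ContinuousLinearMap.proj i : (Fin n → ℝ) →L[ℝ] ℝ).hasFDerivAt
    (x := x)).const_add (1:ℝ)

/-- the block functions -/
noncomputable def dd (A : Finset (Fin n)) : (Fin n → ℝ) → ℝ := fun h =>
  (-1 : ℝ) ^ (A.card + 1) * (Nat.factorial (A.card - 1) : ℝ) *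
    ((if A.card = 1 then ∑ i ∈ A, 2 * (1 + h i)⁻¹ else 0)
      - ∑ j, (∏ i ∈ A, a j i) * ((Sfun a j h) ^ A.card)⁻¹)

/-- the function of the theorem -/
noncomputable def ff : (Fin n → ℝ) → ℝ := fun h =>
  (∏ i, (1 + h i) ^ 2) / ∏ j, (1 + ∑ i, a j i * h i)

lemma dd_zero (A : Finset (Fin n)) (hA : A.Nonempty)
    (ha : ∀ i, ∑ j, a j i = 3) :
    dd a A 0 = (-1 : ℝ) ^ A.card * (Nat.factorial (A.card - 1) : ℝ) *
      (if 2 ≤ A.card then ∑ j, ∏ i ∈ A, a j i else 1) := by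
  have hS : ∀ j, Sfun a j (0 : Fin n → ℝ) = 1 := fun j => by simp [Sfun]
  by_cases h1 : A.card = 1
  · obtain ⟨i, hi⟩ := Finset.card_eq_one.1 h1
    subst hi
    have hl : dd a {i} 0 = 2 - ∑ j, a j i := by
      norm_num [dd, hS]
    rw [hl, ha i]
    norm_num
  · have h2 : 2 ≤ A.card := by
      have h0 : A.card ≠ 0 := fun h =>
        (Finset.nonempty_iff_ne_empty.1 hA) (Finset.card_eq_zero.1 h)
      omega
    simp only [dd, hS, if_neg h1, if_pos h2, one_pow, inv_one, mul_one, zero_sub]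
    rw [pow_succ]
    ring

lemma key_dd (A : Finset (Fin n)) (hA : A.Nonempty) {x : Fin n → ℝ} (hx : x ∈ Uset a) :
    ∃ L : (Fin n → ℝ) →L[ℝ] ℝ, HasFDerivAt (dd a A) L x ∧
      ∀ k, k ∉ A → L (Pi.single k 1) = dd a (insert k A) x := by
  classical
  set c := A.card with hcdef
  have hc : 0 < c := Finset.card_pos.2 hA
  -- derivative of the j-sum part
  set LM : (Fin n → ℝ) →L[ℝ] ℝ := ∑ j, (∏ i ∈ A, a j i) •
      ((-(c : ℝ) * ((Sfun a j x) ^ (c + 1))⁻¹) • Lmap a j) with hLMdef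
  have hM : HasFDerivAt (fun h : Fin n → ℝ => ∑ j, (∏ i ∈ A, a j i) * ((Sfun a j h) ^ c)⁻¹)
      LM x :=
    HasFDerivAt.fun_sum fun j _ =>
      (hasFDerivAt_inv_pow_comp (hasFDerivAt_Sfun a j x) (hx.2 j) c).const_mul _
  have hLM : ∀ k, LM (Pi.single k 1) =
      ∑ j, (∏ i ∈ A, a j i) * (-(c : ℝ) * ((Sfun a j x) ^ (c + 1))⁻¹ * a j k) := by
    intro k
    simp only [hLMdef, ContinuousLinearMap.sum_apply, ContinuousLinearMap.smul_apply,
      smul_eq_mul, Lmap_single, mul_assoc]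
  -- the numerator part
  set LN : (Fin n → ℝ) →L[ℝ] ℝ := if c = 1 then
      ∑ i ∈ A, (2 : ℝ) • ((-((1:ℕ) : ℝ) * ((1 + x i) ^ (1 + 1))⁻¹) • ContinuousLinearMap.proj i)
    else 0 with hLNdef
  have hN : HasFDerivAt (fun h : Fin n → ℝ =>
      if c = 1 then ∑ i ∈ A, 2 * (1 + h i)⁻¹ else (0:ℝ)) LN x := by
    by_cases h1 : c = 1
    · simp only [if_pos h1, hLNdef]
      refine HasFDerivAt.fun_sum fun i _ => ?_
      have h2 := (hasFDerivAt_inv_pow_comp (hasFDerivAt_coord i x) (hx.1 i) 1).const_mul (2:ℝ)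
      have h3 : (fun y : Fin n → ℝ => 2 * ((1 + y i) ^ 1)⁻¹) = fun y => 2 * (1 + y i)⁻¹ := by
        funext y; rw [pow_one]
      rw [h3] at h2
      exact h2
    · simp only [if_neg h1, hLNdef]
      exact hasFDerivAt_const 0 x
  have hLN : ∀ k, k ∉ A → LN (Pi.single k 1) = 0 := by
    intro k hk
    by_cases h1 : c = 1
    · simp only [hLNdef, if_pos h1, ContinuousLinearMap.sum_apply,
        ContinuousLinearMap.smul_apply, ContinuousLinearMap.proj_apply, smul_eq_mul]
      refine Finset.sum_eq_zero fun i hi => ?_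
      have hik : i ≠ k := fun h => hk (h ▸ hi)
      rw [Pi.single_eq_of_ne hik]
      ring
    · simp [hLNdef, if_neg h1]
  -- assemble
  have hdd : dd a A = fun h =>
      ((-1 : ℝ) ^ (c + 1) * (Nat.factorial (c - 1) : ℝ)) *
        ((if c = 1 then ∑ i ∈ A, 2 * (1 + h i)⁻¹ else 0)
          - ∑ j, (∏ i ∈ A, a j i) * ((Sfun a j h) ^ c)⁻¹) := rfl
  have htot : HasFDerivAt (dd a A)
      (((-1 : ℝ) ^ (c + 1) * (Nat.factorial (c - 1) : ℝ)) • (LN - LM)) x := by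
    rw [hdd]
    exact (hN.sub hM).const_mul _
  refine ⟨_, htot, ?_⟩
  intro k hk
  have hcard : (insert k A).card = c + 1 := Finset.card_insert_of_notMem hk
  have hne : ¬((insert k A).card = 1) := by omega
  have hfac : (Nat.factorial c : ℝ) = (c : ℝ) * (Nat.factorial (c - 1) : ℝ) := by
    exact_mod_cast (Nat.mul_factorial_pred hc.ne').symm
  have hins : dd a (insert k A) x
      = (-1 : ℝ) ^ (c + 1 + 1) * (Nat.factorial c : ℝ) *
          (0 - ∑ j, (a j k * ∏ i ∈ A, a j i) * ((Sfun a j x) ^ (c + 1))⁻¹) := by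
    simp only [dd, hcard, Finset.prod_insert hk, Nat.add_sub_cancel]
    rw [if_neg (show ¬(c + 1 = 1) by omega)]
  have hval : (((-1 : ℝ) ^ (c + 1) * (Nat.factorial (c - 1) : ℝ)) • (LN - LM)) (Pi.single k 1)
      = (-1 : ℝ) ^ (c + 1) * (Nat.factorial (c - 1) : ℝ) *
          (0 - ∑ j, (∏ i ∈ A, a j i) * (-(c : ℝ) * ((Sfun a j x) ^ (c + 1))⁻¹ * a j k)) := by
    simp only [ContinuousLinearMap.smul_apply, ContinuousLinearMap.sub_apply, smul_eq_mul,
      hLN k hk, hLM k]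
  rw [hval, hins]
  rw [zero_sub, zero_sub, mul_neg, mul_neg, neg_inj, Finset.mul_sum, Finset.mul_sum]
  refine Finset.sum_congr rfl fun j _ => ?_
  rw [hfac]
  ring

lemma key_f {x : Fin n → ℝ} (hx : x ∈ Uset a) :
    ∃ L : (Fin n → ℝ) →L[ℝ] ℝ, HasFDerivAt (ff a) L x ∧
      ∀ k, L (Pi.single k 1) = ff a x * dd a {k} x := by
  classical
  set P : (Fin n → ℝ) → ℝ := fun h => ∏ i, (1 + h i) ^ 2 with hPdef
  set D : (Fin n → ℝ) → ℝ := fun h => ∏ j, Sfun a j h with hDdef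
  have hPder : ∀ i : Fin n, HasFDerivAt (fun h : Fin n → ℝ => (1 + h i) ^ 2)
      (((((1:ℕ) : ℝ) + 1) * (1 + x i) ^ 1) • (ContinuousLinearMap.proj i :
        (Fin n → ℝ) →L[ℝ] ℝ)) x := fun i =>
    hasFDerivAt_pow_comp (hasFDerivAt_coord i x) 1
  have hP : HasFDerivAt P (∑ i ∈ univ, (∏ i' ∈ univ.erase i, (1 + x i') ^ 2) •
      (((((1:ℕ) : ℝ) + 1) * (1 + x i) ^ 1) • (ContinuousLinearMap.proj i :
        (Fin n → ℝ) →L[ℝ] ℝ))) x :=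
    HasFDerivAt.finset_prod (fun i _ => hPder i)
  have hD : HasFDerivAt D (∑ j ∈ univ, (∏ j' ∈ univ.erase j, Sfun a j' x) • Lmap a j) x :=
    HasFDerivAt.finset_prod (fun j _ => hasFDerivAt_Sfun a j x)
  have hDx : D x ≠ 0 := Finset.prod_ne_zero_iff.2 fun j _ => hx.2 j
  have hinv := hasFDerivAt_inv_pow_comp hD hDx 1
  have hpow1 : (fun y => (D y ^ 1)⁻¹) = fun y => (D y)⁻¹ := by funext y; rw [pow_one]
  rw [hpow1] at hinv
  have hffeq : ff a = fun y => P y * (D y)⁻¹ := by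
    funext y; simp [ff, hPdef, hDdef, Sfun, div_eq_mul_inv]
  have hmul := hP.fun_mul hinv
  rw [← hffeq] at hmul
  refine ⟨_, hmul, ?_⟩
  intro k
  have hddk : dd a {k} x = 2 * (1 + x k)⁻¹ - ∑ j, a j k * (Sfun a j x)⁻¹ := by
    norm_num [dd]
  have hPk : (∏ i' ∈ univ.erase k, (1 + x i') ^ 2) * (1 + x k) ^ 2 = P x :=
    Finset.prod_erase_mul univ _ (mem_univ k)
  have hDj : ∀ j, (∏ j' ∈ univ.erase j, Sfun a j' x) * Sfun a j x = D x := fun j =>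
    Finset.prod_erase_mul univ _ (mem_univ j)
  have hsum : ∑ j, a j k * (Sfun a j x)⁻¹
      = (∑ j, (∏ j' ∈ univ.erase j, Sfun a j' x) * a j k) * (D x)⁻¹ := by
    rw [Finset.sum_mul]
    refine Finset.sum_congr rfl fun j _ => ?_
    have hSj := hx.2 j
    have hinvS : (Sfun a j x)⁻¹ = (∏ j' ∈ univ.erase j, Sfun a j' x) * (D x)⁻¹ := by
      field_simp
      exact (hDj j).symm.trans (mul_comm _ _)
    rw [hinvS]
    ring
  -- evaluate the derivative
  have hPeval : (∑ i ∈ univ, (∏ i' ∈ univ.erase i, (1 + x i') ^ 2) •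
      (((((1:ℕ) : ℝ) + 1) * (1 + x i) ^ 1) • (ContinuousLinearMap.proj i :
        (Fin n → ℝ) →L[ℝ] ℝ))) (Pi.single k 1)
      = (∏ i' ∈ univ.erase k, (1 + x i') ^ 2) * (2 * (1 + x k)) := by
    simp only [ContinuousLinearMap.sum_apply, ContinuousLinearMap.smul_apply,
      ContinuousLinearMap.proj_apply, smul_eq_mul, Pi.single_apply, pow_one,
      Nat.cast_one, mul_ite, mul_one, mul_zero]
    rw [Finset.sum_ite_eq' univ k]
    simp only [mem_univ, if_pos]
    ring
  have hDeval : (∑ j ∈ univ, (∏ j' ∈ univ.erase j, Sfun a j' x) • Lmap a j) (Pi.single k 1)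
      = ∑ j, (∏ j' ∈ univ.erase j, Sfun a j' x) * a j k := by
    simp only [ContinuousLinearMap.sum_apply, ContinuousLinearMap.smul_apply, smul_eq_mul,
      Lmap_single]
  simp only [ContinuousLinearMap.add_apply, ContinuousLinearMap.smul_apply, smul_eq_mul,
    hPeval, hDeval]
  rw [hddk, hsum, congrFun hffeq x, ← hPk]
  have hxk : (1 : ℝ) + x k ≠ 0 := hx.1 k
  push_cast
  field_simp
  ring


lemma parts_empty_eq {α : Type*} [DecidableEq α] (π : Finpartition (∅ : Finset α)) :
    π.parts = ∅ := by
  rw [Finset.eq_empty_iff_forall_notMem]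
  intro A hA
  obtain ⟨y, hy⟩ := π.nonempty_of_mem_parts hA
  exact absurd (π.le hA hy) (Finset.notMem_empty y)

lemma sum_finpartition_empty {α : Type*} [DecidableEq α] (F : Finset α → ℝ) :
    ∑ π : Finpartition (∅ : Finset α), ∏ A ∈ π.parts, F A = 1 := by
  haveI : Unique (Finpartition (∅ : Finset α)) :=
    inferInstanceAs (Unique (Finpartition (⊥ : Finset α)))
  rw [Fintype.sum_unique, parts_empty_eq, Finset.prod_empty]

lemma mixed_eq (l : List (Fin n)) (s : Finset (Fin n)) (hl : l.Nodup) (hls : l.toFinset = s) :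
    ∀ x ∈ Uset a, mixedPartial l (ff a) x
      = ff a x * ∑ π : Finpartition s, ∏ A ∈ π.parts, dd a A x := by
  induction l generalizing s with
  | nil =>
    intro x hx
    have hs : s = ∅ := by rw [← hls, List.toFinset_nil]
    subst hs
    rw [sum_finpartition_empty]
    simp [mixedPartial]
  | cons k l' IH =>
    intro x hx
    have hk : k ∉ l' := (List.nodup_cons.1 hl).1
    have hl' : l'.Nodup := (List.nodup_cons.1 hl).2
    have hknot : k ∉ l'.toFinset := fun h => hk (List.mem_toFinset.1 h)
    have hs2 : s = insert k l'.toFinset := by rw [← hls, List.toFinset_cons]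
    subst hs2
    have hDD : ∀ A : Finset (Fin n), ∃ L : (Fin n → ℝ) →L[ℝ] ℝ,
        (A.Nonempty → HasFDerivAt (dd a A) L x) ∧
        (A.Nonempty → ∀ k', k' ∉ A → L (Pi.single k' 1) = dd a (insert k' A) x) := by
      intro A
      by_cases hA : A.Nonempty
      · obtain ⟨L, h1, h2⟩ := key_dd a A hA hx
        exact ⟨L, fun _ => h1, fun _ => h2⟩
      · exact ⟨0, fun h => absurd h hA, fun h => absurd h hA⟩
    choose g' hg1 hg2 using hDD
    obtain ⟨Lf, hLf, hLfe⟩ := key_f a hx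
    have hprod : ∀ π : Finpartition l'.toFinset, HasFDerivAt
        (fun y => ∏ A ∈ π.parts, dd a A y)
        (∑ A ∈ π.parts, (∏ B ∈ π.parts.erase A, dd a B x) • g' A) x := fun π =>
      HasFDerivAt.finset_prod fun A hA => hg1 A (π.nonempty_of_mem_parts hA)
    have hsum : HasFDerivAt
        (fun y => ∑ π : Finpartition l'.toFinset, ∏ A ∈ π.parts, dd a A y)
        (∑ π : Finpartition l'.toFinset,
          ∑ A ∈ π.parts, (∏ B ∈ π.parts.erase A, dd a B x) • g' A) x :=
      HasFDerivAt.fun_sum fun π _ => hprod π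
    have hmul := hLf.fun_mul hsum
    have heq : mixedPartial l' (ff a) =ᶠ[nhds x] fun y =>
        ff a y * ∑ π : Finpartition l'.toFinset, ∏ A ∈ π.parts, dd a A y :=
      Filter.eventuallyEq_of_mem ((isOpen_Uset a).mem_nhds hx)
        (fun y hy => IH l'.toFinset hl' rfl y hy)
    show fderiv ℝ (mixedPartial l' (ff a)) x (Pi.single k 1) = _
    rw [heq.fderiv_eq, hmul.fderiv]
    simp only [ContinuousLinearMap.add_apply, ContinuousLinearMap.smul_apply, smul_eq_mul,
      hLfe k]
    have heval : (∑ π : Finpartition l'.toFinset, ∑ A ∈ π.parts,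
        (∏ B ∈ π.parts.erase A, dd a B x) • g' A) (Pi.single k 1)
        = ∑ π : Finpartition l'.toFinset, ∑ A ∈ π.parts,
            dd a (insert k A) x * ∏ B ∈ π.parts.erase A, dd a B x := by
      simp only [ContinuousLinearMap.sum_apply, ContinuousLinearMap.smul_apply, smul_eq_mul]
      refine Finset.sum_congr rfl fun π _ => Finset.sum_congr rfl fun A hA => ?_
      have hAne := π.nonempty_of_mem_parts hA
      have hkA : k ∉ A := fun h => hknot (π.le hA h)
      rw [hg2 A hAne k hkA]
      ring
    rw [heval]
    rw [sum_finpartition_insert (α := Fin n) (s := l'.toFinset) (k := k) hknot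
      (fun A => dd a A x)]
    ring

end MPAux

/-- Let `a j i` (for `j < m`, `i < n`) be reals with `Σ_j a j i = 3` for every `i`, and
`f(h) = ∏ᵢ (1+hᵢ)² / ∏ⱼ (1 + Σᵢ a j i · hᵢ)`.  Then
`∂₁⋯∂_n f |_{h=0} = (−1)ⁿ Σ_{I ∈ Π_n} ε_I ∏_{A ∈ I, |A| ≥ 2} (Σⱼ ∏_{i∈A} a j i)`,
where `ε_I = ∏_{A ∈ I} (|A|−1)!`. -/
theorem mixedPartial_ratio_at_zero
    {n m : ℕ} (hn : 1 ≤ n) (a : Fin m → Fin n → ℝ)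
    (ha : ∀ i, ∑ j, a j i = 3)
    (f : (Fin n → ℝ) → ℝ)
    (hf : f = fun h => (∏ i, (1 + h i) ^ 2) / ∏ j, (1 + ∑ i, a j i * h i)) :
    mixedPartial (List.finRange n) f 0
      = (-1 : ℝ) ^ n *
          ∑ I : Finpartition (Finset.univ : Finset (Fin n)),
            (∏ A ∈ I.parts, ((Nat.factorial (A.card - 1)) : ℝ)) *
              ∏ A ∈ I.parts.filter (fun A => 2 ≤ A.card),
                (∑ j, ∏ i ∈ A, a j i) := by
  subst hf
  have hff : (fun h : Fin n → ℝ => (∏ i, (1 + h i) ^ 2) / ∏ j, (1 + ∑ i, a j i * h i))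
      = MPAux.ff a := rfl
  rw [hff, MPAux.mixed_eq a (List.finRange n) Finset.univ (List.nodup_finRange n)
    (List.toFinset_finRange n) 0 (MPAux.zero_mem_Uset a)]
  have hff0 : MPAux.ff a 0 = 1 := by norm_num [MPAux.ff]
  rw [hff0, one_mul, Finset.mul_sum]
  refine Finset.sum_congr rfl fun π _ => ?_
  have hprod : ∏ A ∈ π.parts, MPAux.dd a A 0
      = ∏ A ∈ π.parts, ((-1 : ℝ) ^ A.card * (Nat.factorial (A.card - 1) : ℝ) *
          (if 2 ≤ A.card then ∑ j, ∏ i ∈ A, a j i else 1)) :=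
    Finset.prod_congr rfl fun A hA => MPAux.dd_zero a A (π.nonempty_of_mem_parts hA) ha
  rw [hprod, Finset.prod_mul_distrib, Finset.prod_mul_distrib,
    Finset.prod_pow_eq_pow_sum, π.sum_card_parts, Finset.card_univ, Fintype.card_fin,
    ← Finset.prod_filter]
  ring
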